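/- Suppose a set of gaps {G_i} with degrees {d_i} is obtained by inserting a sibling portrait into a round gap of degree d_j. Then the degrees satisfy Σ_i (d_i − 1) = d_j − 1. In particular, for a finite lamination in the full disk (degree d) consisting of disjoint polygons each belonging to a sibling portrait, the sum of (degree − 1) over all gaps equals d − 1. -/
import Mathlib


/-- Cyclic displacement (number of steps counterclockwise) from `a` to `x` among
`m` marked points on the circle. -/
def arcPos {m : ℕ} (a x : Fin m) : ℕ := (x.val + m - a.val) % m

/-- `t` lies strictly between `p` and `q` in counterclockwise cyclic order. -/
def CycBtw {m : ℕ} (p t q : Fin m) : Prop := 0 < arcPos p t ∧ arcPos p t < arcPos p q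

/-- `q` is the next vertex of `S` counterclockwise after `p`. -/
def IsNext {m : ℕ} (S : Finset (Fin m)) (p q : Fin m) : Prop :=
  p ∈ S ∧ q ∈ S ∧ p ≠ q ∧ ∀ r ∈ S, ¬ CycBtw p r q

/-- The label of a marked point: the points are cyclically labeled by repetitions
of the word `x_0 x_1 … x_{n-1}`. -/
def label (n : ℕ) {m : ℕ} (p : Fin m) : ZMod n := (p.val : ZMod n)

/-- `S` is a polygon visiting the labels in positive (counterclockwise) cyclic
order, i.e. its boundary maps forward as a positively oriented covering of the
boundary of the `n`-gon. -/
def IsPosPolygon (n : ℕ) {m : ℕ} (S : Finset (Fin m)) : Prop :=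
  2 ≤ S.card ∧ n ∣ S.card ∧ ∀ p q, IsNext S p q → label n q = label n p + 1

/-- Two vertex sets cross (link) on the circle. -/
def Crosses {m : ℕ} (S T : Finset (Fin m)) : Prop :=
  ∃ p ∈ S, ∃ q ∈ S, ∃ r ∈ T, ∃ s ∈ T, CycBtw p r q ∧ CycBtw q s p

/-- A sibling portrait of the `n`-gon in a round gap of degree `D`: a collection of
pairwise disjoint, non-crossing, positively oriented polygons using all `D*n`
preimage points (so that together `D` sides map to each side of the `n`-gon). -/
def IsPortrait (D n : ℕ) (PP : Finset (Finset (Fin (D * n)))) : Prop :=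
  (∀ S ∈ PP, IsPosPolygon n S) ∧
  (∀ S ∈ PP, ∀ T ∈ PP, S ≠ T → Disjoint S T ∧ ¬ Crosses S T) ∧
  (∀ p : Fin (D * n), ∃ S ∈ PP, p ∈ S)

/-- Unit arcs `k` (between the marked points `k` and `k+1`) and `l` lie in the same
complementary region (round gap) determined by the polygons of `PP`: no polygon of
`PP` has vertices strictly on both sides of the pair of arcs. -/
def SameRegion {m : ℕ} [NeZero m] (PP : Finset (Finset (Fin m))) (k l : Fin m) : Prop :=
  k = l ∨ ∀ S ∈ PP, ¬ ((∃ p ∈ S, arcPos (k + 1) p ≤ arcPos (k + 1) l) ∧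
                        (∃ q ∈ S, arcPos (l + 1) q ≤ arcPos (l + 1) k))

/-- The number of round gaps: equivalence classes of unit arcs under `SameRegion`. -/
noncomputable def numRoundGaps {m : ℕ} [NeZero m] (PP : Finset (Finset (Fin m))) : ℕ :=
  Nat.card {C : Set (Fin m) // ∃ k : Fin m, C = {l | SameRegion PP k l}}


set_option linter.unusedSectionVars false

section AuxArith

lemma arcPos_spec {m : ℕ} (a x : Fin m) :
    (a.val ≤ x.val ∧ arcPos a x = x.val - a.val) ∨
    (x.val < a.val ∧ arcPos a x = x.val + m - a.val) := by
  have hx := x.isLt; have ha := a.isLt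
  unfold arcPos
  rcases le_or_gt a.val x.val with h | h
  · left; refine ⟨h, ?_⟩
    have e : x.val + m - a.val = (x.val - a.val) + m := by omega
    rw [e, Nat.add_mod_right, Nat.mod_eq_of_lt (by omega)]
  · right; exact ⟨h, Nat.mod_eq_of_lt (by omega)⟩

lemma succ_spec {m : ℕ} [NeZero m] (a : Fin m) :
    ((a + 1 : Fin m).val = a.val + 1 ∧ a.val + 1 < m) ∨
    ((a + 1 : Fin m).val = 0 ∧ a.val + 1 = m) := by
  have hm := Nat.pos_of_ne_zero (NeZero.ne m)
  have ha := a.isLt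
  have h1 : ((1:Fin m)).val = 1 % m := Fin.val_one' m
  have hd : ((a+1 : Fin m)).val = (a.val + (1:Fin m).val) % m := Fin.val_add a 1
  rw [h1] at hd
  rcases le_or_gt m 1 with h2 | h2
  · have hm1 : m = 1 := by omega
    subst hm1; right; omega
  · rw [Nat.mod_eq_of_lt h2] at hd
    rcases Nat.lt_or_ge (a.val+1) m with h | h
    · left; exact ⟨by rw [hd]; exact Nat.mod_eq_of_lt h, h⟩
    · right
      have e : a.val + 1 = m := by omega
      exact ⟨by rw [hd, e, Nat.mod_self], e⟩

lemma pred_spec {m : ℕ} [NeZero m] (a : Fin m) :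
    ((a - 1 : Fin m).val = a.val - 1 ∧ 1 ≤ a.val) ∨
    ((a - 1 : Fin m).val = m - 1 ∧ a.val = 0) := by
  have hm := Nat.pos_of_ne_zero (NeZero.ne m)
  have ha := a.isLt
  have h1 : ((1:Fin m)).val = 1 % m := Fin.val_one' m
  have hd : ((a - 1 : Fin m)).val = (m - (1:Fin m).val + a.val) % m := by
    rw [Fin.sub_def]
  rw [h1] at hd
  rcases le_or_gt m 1 with h2 | h2
  · have hm1 : m = 1 := by omega
    subst hm1; right
    exact ⟨by omega, by omega⟩
  · rw [Nat.mod_eq_of_lt h2] at hd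
    rcases Nat.eq_zero_or_pos a.val with h0 | h0
    · right
      refine ⟨?_, h0⟩
      rw [hd, h0, Nat.add_zero]
      exact Nat.mod_eq_of_lt (by omega)
    · left
      refine ⟨?_, h0⟩
      rw [hd]
      have e : m - 1 + a.val = (a.val - 1) + m := by omega
      rw [e, Nat.add_mod_right, Nat.mod_eq_of_lt (by omega)]

lemma arcPos_lt {m : ℕ} [NeZero m] (a x : Fin m) : arcPos a x < m := by
  have := arcPos_spec a x; have := x.isLt; have := a.isLt; omega

lemma arcPos_self {m : ℕ} (a : Fin m) : arcPos a a = 0 := by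
  have := arcPos_spec a a; omega

lemma arcPos_inj {m : ℕ} {a x y : Fin m} (h : arcPos a x = arcPos a y) : x = y := by
  have h1 := arcPos_spec a x; have h2 := arcPos_spec a y
  have := x.isLt; have := y.isLt; have := a.isLt
  exact Fin.ext (by omega)

lemma arcPos_eq_zero_iff {m : ℕ} {a x : Fin m} : arcPos a x = 0 ↔ x = a := by
  constructor
  · intro h; exact arcPos_inj (h.trans (arcPos_self _).symm)
  · rintro rfl; exact arcPos_self _

lemma dichotomy {m : ℕ} [NeZero m] {k l : Fin m} (h : k ≠ l) (x : Fin m) :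
    arcPos (l+1) x ≤ arcPos (l+1) k ↔ ¬ (arcPos (k+1) x ≤ arcPos (k+1) l) := by
  have hkl : k.val ≠ l.val := fun e => h (Fin.ext e)
  have s1 := arcPos_spec (k+1) x
  have s2 := arcPos_spec (k+1) l
  have s3 := arcPos_spec (l+1) x
  have s4 := arcPos_spec (l+1) k
  have u1 := succ_spec k
  have u2 := succ_spec l
  have := x.isLt; have := k.isLt; have := l.isLt
  omega

lemma arcPos_succ_self {m : ℕ} [NeZero m] (k : Fin m) : arcPos (k+1) k = m - 1 := by
  have s := arcPos_spec (k+1) k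
  have u := succ_spec k
  have := k.isLt
  omega

lemma basechange_le {m : ℕ} [NeZero m] {a b x : Fin m} (h : arcPos a b ≤ arcPos a x) :
    arcPos b x = arcPos a x - arcPos a b := by
  have s1 := arcPos_spec a b
  have s2 := arcPos_spec a x
  have s3 := arcPos_spec b x
  have := a.isLt; have := b.isLt; have := x.isLt
  omega

lemma basechange_gt {m : ℕ} [NeZero m] {a b x : Fin m} (h : arcPos a x < arcPos a b) :
    arcPos b x = arcPos a x + m - arcPos a b := by
  have s1 := arcPos_spec a b
  have s2 := arcPos_spec a x
  have s3 := arcPos_spec b x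
  have := a.isLt; have := b.isLt; have := x.isLt
  omega

lemma arcPos_pred_f {m : ℕ} [NeZero m] {a p : Fin m} (h : arcPos a p ≠ 0) :
    arcPos a (p-1) = arcPos a p - 1 := by
  have s1 := arcPos_spec a (p-1)
  have s2 := arcPos_spec a p
  have pd := pred_spec p
  have := p.isLt; have := a.isLt
  omega

lemma interval_iff {m : ℕ} [NeZero m] {k l j : Fin m}
    (hlj : arcPos (k+1) l < arcPos (k+1) j) (x : Fin m) :
    arcPos (l+1) x ≤ arcPos (l+1) j ↔
      (arcPos (k+1) l < arcPos (k+1) x ∧ arcPos (k+1) x ≤ arcPos (k+1) j) := by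
  have s1 := arcPos_spec (l+1) x
  have s2 := arcPos_spec (l+1) j
  have s3 := arcPos_spec (k+1) x
  have s4 := arcPos_spec (k+1) l
  have s5 := arcPos_spec (k+1) j
  have u1 := succ_spec k
  have u2 := succ_spec l
  have := x.isLt; have := k.isLt; have := l.isLt; have := j.isLt
  omega

end AuxArith

section ArcSepDefs

/-- `S` separates arcs `k` and `l`. -/
def ArcSep {m : ℕ} [NeZero m] (S : Finset (Fin m)) (k l : Fin m) : Prop :=
  (∃ p ∈ S, arcPos (k + 1) p ≤ arcPos (k + 1) l) ∧
  (∃ q ∈ S, arcPos (l + 1) q ≤ arcPos (l + 1) k)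

variable {m : ℕ} [NeZero m]

lemma sameRegion_iff (PP : Finset (Finset (Fin m))) (k l : Fin m) :
    SameRegion PP k l ↔ k = l ∨ ∀ S ∈ PP, ¬ ArcSep S k l := Iff.rfl

lemma sep_symm {S : Finset (Fin m)} {k l : Fin m} (h : ArcSep S k l) : ArcSep S l k :=
  ⟨h.2, h.1⟩

lemma sep_mono {S S' : Finset (Fin m)} {k l : Fin m} (hsub : S' ⊆ S)
    (h : ArcSep S' k l) : ArcSep S k l := by
  obtain ⟨⟨a, ha, h1⟩, ⟨b, hb, h2⟩⟩ := h
  exact ⟨⟨a, hsub ha, h1⟩, ⟨b, hsub hb, h2⟩⟩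

lemma sameRegion_refl (PP : Finset (Finset (Fin m))) (k : Fin m) :
    SameRegion PP k k := Or.inl rfl

lemma sameRegion_symm {PP : Finset (Finset (Fin m))} {k l : Fin m}
    (h : SameRegion PP k l) : SameRegion PP l k := by
  rcases h with rfl | h
  · exact Or.inl rfl
  · exact Or.inr fun S hS hsep => h S hS (sep_symm hsep)

lemma sameRegion_trans {PP : Finset (Finset (Fin m))} {k l j : Fin m}
    (h1 : SameRegion PP k l) (h2 : SameRegion PP l j) : SameRegion PP k j := by
  by_cases hkl : k = l
  · subst hkl; exact h2
  by_cases hlj : l = j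
  · subst hlj; exact h1
  by_cases hkj : k = j
  · exact Or.inl hkj
  replace h1 : ∀ S ∈ PP, ¬ ArcSep S k l := h1.resolve_left hkl
  replace h2 : ∀ S ∈ PP, ¬ ArcSep S l j := h2.resolve_left hlj
  refine Or.inr fun S hS hsep => ?_
  obtain ⟨⟨s1, hs1S, hs1⟩, ⟨s2, hs2S, hs2⟩⟩ := hsep
  -- f-coordinates w.r.t. base k+1
  have hfj : arcPos (k+1) j < arcPos (k+1) s2 := by
    have := (dichotomy hkj s2).mp hs2; omega
  have hlj' : arcPos (k+1) l ≠ arcPos (k+1) j := fun e => hlj (arcPos_inj e)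
  by_cases c1 : arcPos (k+1) l ≤ arcPos (k+1) j
  · have c1' : arcPos (k+1) l < arcPos (k+1) j := by omega
    by_cases c2 : arcPos (k+1) s1 ≤ arcPos (k+1) l
    · refine h1 S hS ⟨⟨s1, hs1S, c2⟩, ⟨s2, hs2S, ?_⟩⟩
      exact (dichotomy hkl s2).mpr (by omega)
    · refine h2 S hS ⟨⟨s1, hs1S, ?_⟩, ⟨s2, hs2S, ?_⟩⟩
      · exact (interval_iff c1' s1).mpr ⟨by omega, hs1⟩
      · refine (dichotomy hlj s2).mpr fun hh => ?_
        have := (interval_iff c1' s2).mp hh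
        omega
  · have c1' : arcPos (k+1) j < arcPos (k+1) l := by omega
    by_cases c2 : arcPos (j+1) s2 ≤ arcPos (j+1) l
    · refine h2 S hS (sep_symm ⟨⟨s2, hs2S, c2⟩, ⟨s1, hs1S, ?_⟩⟩)
      refine (dichotomy (fun e => hlj e.symm) s1).mpr fun hh => ?_
      have := (interval_iff c1' s1).mp hh
      omega
    · have hs2l : ¬ (arcPos (k+1) j < arcPos (k+1) s2 ∧ arcPos (k+1) s2 ≤ arcPos (k+1) l) :=
        fun hh => c2 ((interval_iff c1' s2).mpr hh)
      refine h1 S hS ⟨⟨s1, hs1S, by omega⟩, ⟨s2, hs2S, ?_⟩⟩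
      exact (dichotomy hkl s2).mpr (by omega)

lemma not_crosses_singleton_left (p : Fin m) (T : Finset (Fin m)) :
    ¬ Crosses {p} T := by
  rintro ⟨a, ha, b, hb, r, hr, s, hs, h1, h2⟩
  rw [Finset.mem_singleton] at ha hb
  rw [ha, hb] at h1
  obtain ⟨h1a, h1b⟩ := h1
  have := arcPos_self p
  omega

lemma not_crosses_singleton_right (T : Finset (Fin m)) (p : Fin m) :
    ¬ Crosses T {p} := by
  rintro ⟨a, ha, b, hb, r, hr, s, hs, h1, h2⟩
  rw [Finset.mem_singleton] at hr hs
  rw [hr] at h1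
  rw [hs] at h2
  obtain ⟨h1a, h1b⟩ := h1
  obtain ⟨h2a, h2b⟩ := h2
  have q1 := arcPos_spec a p
  have q2 := arcPos_spec a b
  have q3 := arcPos_spec b p
  have q4 := arcPos_spec b a
  have := a.isLt; have := b.isLt; have := p.isLt
  omega

lemma crosses_mono {S T S' T' : Finset (Fin m)} (hS : S' ⊆ S) (hT : T' ⊆ T)
    (h : Crosses S' T') : Crosses S T := by
  obtain ⟨a, ha, b, hb, r, hr, s, hs, h1, h2⟩ := h
  exact ⟨a, hS ha, b, hS hb, r, hT hr, s, hT hs, h1, h2⟩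

end ArcSepDefs

section HalfKey

variable {m : ℕ} [NeZero m]

lemma half_key {PP : Finset (Finset (Fin m))}
    (hcr : ∀ S ∈ PP, ∀ T ∈ PP, S ≠ T → Disjoint S T ∧ ¬ Crosses S T)
    {S : Finset (Fin m)} (hS : S ∈ PP) {p k l : Fin m} (hp : p ∈ S)
    (hkl : k ≠ l)
    (huniq : ∀ T ∈ PP, T ≠ S → ¬ ArcSep T k l)
    (honly : ∀ x ∈ S, arcPos (k+1) x ≤ arcPos (k+1) l → x = p)
    (hq : ∃ q ∈ S, arcPos (l+1) q ≤ arcPos (l+1) k)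
    (hpI1 : arcPos (k+1) p ≤ arcPos (k+1) l) :
    SameRegion PP k (p - 1) ∧ SameRegion PP p l := by
  obtain ⟨q, hqS, hql⟩ := hq
  have hfq : arcPos (k+1) l < arcPos (k+1) q := by
    have := (dichotomy hkl q).mp hql; omega
  have hflk : arcPos (k+1) k = m - 1 := arcPos_succ_self k
  have hfl_lt : arcPos (k+1) l < m := arcPos_lt _ _
  have hfq_lt : arcPos (k+1) q < m := arcPos_lt _ _
  have hfl_ne : arcPos (k+1) l ≠ m - 1 :=
    fun e => hkl (arcPos_inj (e.trans hflk.symm)).symm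
  constructor
  · -- SameRegion PP k (p-1)
    by_cases hk1 : k = p - 1
    · exact Or.inl hk1
    have hpk1 : p ≠ k + 1 := by
      intro e; exact hk1 (by rw [e, add_sub_cancel_right])
    have hfp_pos : arcPos (k+1) p ≠ 0 := fun e => hpk1 (arcPos_eq_zero_iff.mp e)
    have hpm1 : arcPos (k+1) (p-1) = arcPos (k+1) p - 1 := arcPos_pred_f hfp_pos
    have hp1e : ((p - 1) + 1 : Fin m) = p := sub_add_cancel p 1
    refine Or.inr fun T hT hsep => ?_
    obtain ⟨⟨t1, ht1S, ht1⟩, ⟨t2, ht2S, ht2⟩⟩ := hsep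
    rw [hp1e] at ht2
    -- ht1 : arcPos (k+1) t1 ≤ arcPos (k+1) (p-1), ht2 : arcPos p t2 ≤ arcPos p k
    have hint := interval_iff (k := k) (l := p - 1) (j := k)
        (show arcPos (k+1) (p-1) < arcPos (k+1) k by omega) t2
    rw [hp1e] at hint
    have hft2' := hint.mp ht2
    by_cases hTS : T = S
    · subst hTS
      have h1 : arcPos (k+1) t1 ≤ arcPos (k+1) l := by omega
      have h2 := honly t1 ht1S h1
      rw [h2] at ht1; omega
    · have hd := hcr S hS T hT fun e => hTS e.symm
      have hnsep := huniq T hT hTS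
      have e1 : arcPos (k+1) t1 ≤ arcPos (k+1) l := by omega
      have e2 : ¬ (arcPos (l+1) t2 ≤ arcPos (l+1) k) :=
        fun h => hnsep ⟨⟨t1, ht1S, e1⟩, ⟨t2, ht2S, h⟩⟩
      have ht2I1 : arcPos (k+1) t2 ≤ arcPos (k+1) l := by
        by_contra hh; exact e2 ((dichotomy hkl t2).mpr hh)
      have ht2p : t2 ≠ p := fun e => (Finset.disjoint_left.mp hd.1 hp) (e ▸ ht2S)
      have ht2pv : arcPos (k+1) t2 ≠ arcPos (k+1) p := fun e => ht2p (arcPos_inj e)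
      have hft2 : arcPos (k+1) p < arcPos (k+1) t2 := by omega
      have b1 : arcPos p t2 = arcPos (k+1) t2 - arcPos (k+1) p :=
        basechange_le (by omega)
      have b2 : arcPos p q = arcPos (k+1) q - arcPos (k+1) p :=
        basechange_le (by omega)
      have b3 : arcPos q t1 = arcPos (k+1) t1 + m - arcPos (k+1) q :=
        basechange_gt (by omega)
      have b4 : arcPos q p = arcPos (k+1) p + m - arcPos (k+1) q :=
        basechange_gt (by omega)
      have c1 : CycBtw p t2 q := by
        unfold CycBtw; omega
      have c2 : CycBtw q t1 p := by
        unfold CycBtw; omega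
      exact hd.2 ⟨p, hp, q, hqS, t2, ht2S, t1, ht1S, c1, c2⟩
  · -- SameRegion PP p l
    by_cases hpl : p = l
    · exact Or.inl hpl
    have hfpl : arcPos (k+1) p ≠ arcPos (k+1) l := fun e => hpl (arcPos_inj e)
    have hfp_lt : arcPos (k+1) p < arcPos (k+1) l := by omega
    refine Or.inr fun T hT hsep => ?_
    obtain ⟨⟨t1, ht1S, ht1⟩, ⟨t2, ht2S, ht2⟩⟩ := hsep
    -- ht1 : arcPos (p+1) t1 ≤ arcPos (p+1) l, ht2 : arcPos (l+1) t2 ≤ arcPos (l+1) p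
    have hft1 := (interval_iff (k := k) hfp_lt t1).mp ht1
    by_cases hTS : T = S
    · subst hTS
      have h2 := honly t1 ht1S hft1.2
      rw [h2] at hft1; omega
    · have hd := hcr S hS T hT fun e => hTS e.symm
      have hnsep := huniq T hT hTS
      have e2 : ¬ (arcPos (l+1) t2 ≤ arcPos (l+1) k) :=
        fun h => hnsep ⟨⟨t1, ht1S, hft1.2⟩, ⟨t2, ht2S, h⟩⟩
      have ht2I1 : arcPos (k+1) t2 ≤ arcPos (k+1) l := by
        by_contra hh; exact e2 ((dichotomy hkl t2).mpr hh)
      have ht2p : t2 ≠ p := fun e => (Finset.disjoint_left.mp hd.1 hp) (e ▸ ht2S)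
      have ht2pv : arcPos (k+1) t2 ≠ arcPos (k+1) p := fun e => ht2p (arcPos_inj e)
      have hnt2 := (dichotomy hpl t2).mp ht2
      have hft2 : arcPos (k+1) t2 < arcPos (k+1) p := by
        by_contra hh
        exact hnt2 ((interval_iff (k := k) hfp_lt t2).mpr ⟨by omega, ht2I1⟩)
      have b1 : arcPos p t1 = arcPos (k+1) t1 - arcPos (k+1) p :=
        basechange_le (by omega)
      have b2 : arcPos p q = arcPos (k+1) q - arcPos (k+1) p :=
        basechange_le (by omega)
      have b3 : arcPos q t2 = arcPos (k+1) t2 + m - arcPos (k+1) q :=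
        basechange_gt (by omega)
      have b4 : arcPos q p = arcPos (k+1) p + m - arcPos (k+1) q :=
        basechange_gt (by omega)
      have c1 : CycBtw p t1 q := by
        unfold CycBtw; omega
      have c2 : CycBtw q t2 p := by
        unfold CycBtw; omega
      exact hd.2 ⟨p, hp, q, hqS, t1, ht1S, t2, ht2S, c1, c2⟩

end HalfKey

section Counting

variable {m : ℕ} [NeZero m]

/-- The region (set of arcs) of the arc `k`. -/
def regionOf (PP : Finset (Finset (Fin m))) (k : Fin m) : Set (Fin m) :=
  {l | SameRegion PP k l}

lemma mem_regionOf {PP : Finset (Finset (Fin m))} {k l : Fin m} :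
    l ∈ regionOf PP k ↔ SameRegion PP k l := Iff.rfl

lemma regionOf_eq_iff {PP : Finset (Finset (Fin m))} {k k' : Fin m} :
    regionOf PP k = regionOf PP k' ↔ SameRegion PP k k' := by
  constructor
  · intro h
    have hk : k' ∈ regionOf PP k' := sameRegion_refl PP k'
    rw [← h] at hk
    exact hk
  · intro h
    ext l
    exact ⟨fun hl => sameRegion_trans (sameRegion_symm h) hl,
           fun hl => sameRegion_trans h hl⟩

lemma numRoundGaps_eq_ncard (PP : Finset (Finset (Fin m))) :
    numRoundGaps PP = (Set.range (regionOf PP)).ncard := by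
  have he : {C : Set (Fin m) | ∃ k : Fin m, C = {l | SameRegion PP k l}} =
      Set.range (regionOf PP) := by
    ext C
    simp only [Set.mem_setOf_eq, Set.mem_range, regionOf]
    exact ⟨fun ⟨k, hk⟩ => ⟨k, hk.symm⟩, fun ⟨k, hk⟩ => ⟨k, hk.symm⟩⟩
  calc numRoundGaps PP
      = Nat.card {C : Set (Fin m) | ∃ k : Fin m, C = {l | SameRegion PP k l}} := rfl
    _ = {C : Set (Fin m) | ∃ k : Fin m, C = {l | SameRegion PP k l}}.ncard :=
        Nat.card_coe_set_eq _
    _ = (Set.range (regionOf PP)).ncard := by rw [he]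

lemma sum_cards (PP : Finset (Finset (Fin m)))
    (hdisj : ∀ S ∈ PP, ∀ T ∈ PP, S ≠ T → Disjoint S T)
    (hcov : ∀ x : Fin m, ∃ S ∈ PP, x ∈ S) :
    ∑ S ∈ PP, S.card = m := by
  classical
  have hbu : PP.biUnion id = Finset.univ := by
    apply Finset.eq_univ_iff_forall.mpr
    intro x
    obtain ⟨S, hS, hx⟩ := hcov x
    exact Finset.mem_biUnion.mpr ⟨S, hS, hx⟩
  calc ∑ S ∈ PP, S.card = (PP.biUnion id).card :=
        (Finset.card_biUnion (fun S hS T hT hST => hdisj S hS T hT hST)).symm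
    _ = m := by rw [hbu, Finset.card_univ, Fintype.card_fin]

lemma region_count :
    ∀ (N : ℕ) (PP : Finset (Finset (Fin m))),
      (∀ S ∈ PP, S.Nonempty) →
      (∀ S ∈ PP, ∀ T ∈ PP, S ≠ T → Disjoint S T ∧ ¬ Crosses S T) →
      (∀ x : Fin m, ∃ S ∈ PP, x ∈ S) →
      m - PP.card = N →
      (Set.range (regionOf PP)).ncard = N + 1 := by
  intro N
  induction N with
  | zero =>
    intro PP hne hcr hcov hN
    have hsum : ∑ S ∈ PP, S.card = m :=
      sum_cards PP (fun S hS T hT h => (hcr S hS T hT h).1) hcov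
    have hle : PP.card ≤ ∑ S ∈ PP, S.card := by
      calc PP.card = ∑ _S ∈ PP, 1 := by rw [Finset.sum_const, smul_eq_mul, mul_one]
        _ ≤ ∑ S ∈ PP, S.card := Finset.sum_le_sum fun S hS => Finset.card_pos.mpr (hne S hS)
    have hcards : ∀ S ∈ PP, S.card = 1 := by
      by_contra hc
      push_neg at hc
      obtain ⟨S, hS, hSne⟩ := hc
      have hlt : ∑ _S ∈ PP, 1 < ∑ S ∈ PP, S.card :=
        Finset.sum_lt_sum (fun T hT => Finset.card_pos.mpr (hne T hT))
          ⟨S, hS, by have := Finset.card_pos.mpr (hne S hS); omega⟩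
      rw [Finset.sum_const, smul_eq_mul, mul_one] at hlt
      omega
    have hall : ∀ k l : Fin m, SameRegion PP k l := by
      intro k l
      by_cases hkl : k = l
      · exact Or.inl hkl
      refine Or.inr fun T hT hsep => ?_
      obtain ⟨⟨a, haT, ha⟩, ⟨b, hbT, hb⟩⟩ := hsep
      obtain ⟨c, hc⟩ := Finset.card_eq_one.mp (hcards T hT)
      subst hc
      rw [Finset.mem_singleton] at haT hbT
      rw [haT] at ha
      rw [hbT] at hb
      exact (dichotomy hkl c).mp hb ha
    have hreg : ∀ k : Fin m, regionOf PP k = Set.univ :=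
      fun k => Set.eq_univ_iff_forall.mpr (fun l => hall k l)
    have hrng : Set.range (regionOf PP) = {Set.univ} := by
      apply Set.eq_singleton_iff_unique_mem.mpr
      constructor
      · exact ⟨⟨0, Nat.pos_of_ne_zero (NeZero.ne m)⟩, hreg _⟩
      · rintro C ⟨k, rfl⟩
        exact hreg k
    rw [hrng, Set.ncard_singleton]
  | succ N ih =>
    intro PP hne hcr hcov hN
    classical
    have hsum : ∑ S ∈ PP, S.card = m :=
      sum_cards PP (fun S hS T hT h => (hcr S hS T hT h).1) hcov
    obtain ⟨S, hS, hcard⟩ : ∃ S ∈ PP, 2 ≤ S.card := by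
      by_contra hc
      push_neg at hc
      have hone : ∀ S ∈ PP, S.card = 1 := fun S hS => by
        have h1 := Finset.card_pos.mpr (hne S hS); have h2 := hc S hS; omega
      have heq : ∑ S ∈ PP, S.card = PP.card := by
        rw [Finset.sum_congr rfl hone, Finset.sum_const, smul_eq_mul, mul_one]
      omega
    obtain ⟨p, hp⟩ := hne S hS
    set PP' : Finset (Finset (Fin m)) := insert {p} (insert (S.erase p) (PP.erase S))
      with hPP'
    have hm2 : 2 ≤ m := le_trans hcard (by simpa using Finset.card_le_univ S)
    have hpm1p : (p - 1 : Fin m) ≠ p := by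
      have pd := pred_spec p
      have := p.isLt
      intro e
      have := congrArg Fin.val e
      omega
    have herane : (S.erase p).Nonempty := by
      rw [← Finset.card_pos, Finset.card_erase_of_mem hp]; omega
    have hmem' : ∀ T, T ∈ PP' ↔ T = {p} ∨ T = S.erase p ∨ (T ∈ PP ∧ T ≠ S) := by
      intro T
      simp only [hPP', Finset.mem_insert, Finset.mem_erase]
      tauto
    have herase_sub : S.erase p ⊆ S := Finset.erase_subset p S
    have hdisjS : ∀ T ∈ PP, T ≠ S → Disjoint S T :=
      fun T hT h => (hcr S hS T hT (fun e => h e.symm)).1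
    have hne' : ∀ T ∈ PP', T.Nonempty := by
      intro T hT
      rcases (hmem' T).mp hT with rfl | rfl | ⟨hT', _⟩
      · exact ⟨p, Finset.mem_singleton_self p⟩
      · exact herane
      · exact hne T hT'
    have hcr' : ∀ A ∈ PP', ∀ B ∈ PP', A ≠ B → Disjoint A B ∧ ¬ Crosses A B := by
      intro A hA B hB hAB
      rcases (hmem' A).mp hA with rfl | rfl | ⟨hA', hAS⟩ <;>
        rcases (hmem' B).mp hB with rfl | rfl | ⟨hB', hBS⟩
      · exact absurd rfl hAB
      · exact ⟨Finset.disjoint_singleton_left.mpr (Finset.notMem_erase p S),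
          not_crosses_singleton_left p _⟩
      · exact ⟨Finset.disjoint_singleton_left.mpr
            (fun hmem => Finset.disjoint_left.mp (hdisjS B hB' hBS) hp hmem),
          not_crosses_singleton_left p _⟩
      · exact ⟨Finset.disjoint_singleton_right.mpr (Finset.notMem_erase p S),
          not_crosses_singleton_right _ p⟩
      · exact absurd rfl hAB
      · exact ⟨(hdisjS B hB' hBS).mono_left herase_sub,
          fun hcross => (hcr S hS B hB' (fun e => hBS e.symm)).2
            (crosses_mono herase_sub (subset_refl _) hcross)⟩
      · exact ⟨Finset.disjoint_singleton_right.mpr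
            (fun hmem => Finset.disjoint_left.mp (hdisjS A hA' hAS) hp hmem),
          not_crosses_singleton_right _ p⟩
      · exact ⟨((hdisjS A hA' hAS).symm).mono_right herase_sub,
          fun hcross => (hcr A hA' S hS hAS).2
            (crosses_mono (subset_refl _) herase_sub hcross)⟩
      · exact hcr A hA' B hB' hAB
    have hcov' : ∀ x : Fin m, ∃ T ∈ PP', x ∈ T := by
      intro x
      obtain ⟨T, hT, hx⟩ := hcov x
      by_cases hTS : T = S
      · have hxS : x ∈ S := hTS ▸ hx
        by_cases hxp : x = p
        · exact ⟨{p}, (hmem' _).mpr (Or.inl rfl),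
            by rw [hxp]; exact Finset.mem_singleton_self p⟩
        · exact ⟨S.erase p, (hmem' _).mpr (Or.inr (Or.inl rfl)),
            Finset.mem_erase.mpr ⟨hxp, hxS⟩⟩
      · exact ⟨T, (hmem' _).mpr (Or.inr (Or.inr ⟨hT, hTS⟩)), hx⟩
    have hpnotin : ({p} : Finset (Fin m)) ∉ insert (S.erase p) (PP.erase S) := by
      rw [Finset.mem_insert]
      rintro (h | h)
      · exact (Finset.notMem_erase p S) (h ▸ Finset.mem_singleton_self p)
      · obtain ⟨hne_, hmem_⟩ := Finset.mem_erase.mp h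
        exact Finset.disjoint_left.mp (hdisjS _ hmem_ hne_) hp (Finset.mem_singleton_self p)
    have heranotin : S.erase p ∉ PP.erase S := by
      intro h
      obtain ⟨hne_, hmem_⟩ := Finset.mem_erase.mp h
      obtain ⟨y, hy⟩ := herane
      exact Finset.disjoint_left.mp (hdisjS _ hmem_ hne_) (herase_sub hy) hy
    have hcard' : PP'.card = PP.card + 1 := by
      rw [hPP', Finset.card_insert_of_notMem hpnotin,
        Finset.card_insert_of_notMem heranotin, Finset.card_erase_of_mem hS]
      have h1 : 1 ≤ PP.card := Finset.card_pos.mpr ⟨S, hS⟩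
      omega
    have hcardle : PP.card ≤ ∑ T ∈ PP, T.card := by
      calc PP.card = ∑ _T ∈ PP, 1 := by rw [Finset.sum_const, smul_eq_mul, mul_one]
        _ ≤ ∑ T ∈ PP, T.card := Finset.sum_le_sum fun T hT => Finset.card_pos.mpr (hne T hT)
    have hN' : m - PP'.card = N := by omega
    have hIH := ih PP' hne' hcr' hcov' hN'
    -- relating the regions of PP and PP'
    have hAmono : ∀ k l : Fin m, SameRegion PP k l → SameRegion PP' k l := by
      intro k l h
      by_cases hkl : k = l
      · exact Or.inl hkl
      replace h : ∀ T ∈ PP, ¬ ArcSep T k l := h.resolve_left hkl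
      refine Or.inr fun T hT hsep => ?_
      rcases (hmem' T).mp hT with rfl | rfl | ⟨hT', _⟩
      · obtain ⟨⟨a, haT, ha⟩, ⟨b, hbT, hb⟩⟩ := hsep
        rw [Finset.mem_singleton] at haT hbT
        rw [haT] at ha
        rw [hbT] at hb
        exact (dichotomy hkl p).mp hb ha
      · exact h S hS (sep_mono herase_sub hsep)
      · exact h T hT' hsep
    have hB' : ¬ SameRegion PP (p-1) p := by
      intro h
      rcases h with e | h
      · exact hpm1p e
      apply h S hS
      constructor
      · exact ⟨p, hp, le_refl _⟩
      · obtain ⟨q, hqS, hqp⟩ :=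
          Finset.exists_mem_ne (by omega : 1 < S.card) p
        refine ⟨q, hqS, ?_⟩
        have s1 := arcPos_spec (p+1) q
        have s2 := arcPos_spec (p+1) (p-1)
        have u := succ_spec p
        have pd := pred_spec p
        have hqv : q.val ≠ p.val := fun e => hqp (Fin.ext e)
        have := q.isLt; have := p.isLt
        omega
    have hB : SameRegion PP' (p-1) p := by
      refine Or.inr fun T hT hsep => ?_
      obtain ⟨⟨a, haT, ha⟩, ⟨b, hbT, hb⟩⟩ := hsep
      rw [sub_add_cancel, arcPos_self] at ha
      have haP : a = p := arcPos_eq_zero_iff.mp (Nat.le_zero.mp ha)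
      rw [haP] at haT
      rcases (hmem' T).mp hT with rfl | rfl | ⟨hT', hTS⟩
      · rw [Finset.mem_singleton] at hbT
        rw [hbT] at hb
        have h1 := arcPos_succ_self p
        have h2 : arcPos (p+1) (p-1) ≠ m - 1 :=
          fun e => hpm1p (arcPos_inj (e.trans (arcPos_succ_self p).symm))
        have h3 := arcPos_lt (p+1) (p-1)
        omega
      · exact (Finset.notMem_erase p S) haT
      · exact Finset.disjoint_left.mp (hdisjS T hT' hTS) hp haT
    have hC : ∀ k l : Fin m, SameRegion PP' k l →
        SameRegion PP k l ∨ (SameRegion PP k (p-1) ∧ SameRegion PP p l) ∨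
        (SameRegion PP k p ∧ SameRegion PP (p-1) l) := by
      intro k l h'
      by_cases hkl : k = l
      · exact Or.inl (Or.inl hkl)
      by_cases hR : SameRegion PP k l
      · exact Or.inl hR
      replace h' : ∀ T ∈ PP', ¬ ArcSep T k l := h'.resolve_left hkl
      have huniq : ∀ T ∈ PP, T ≠ S → ¬ ArcSep T k l :=
        fun T hT hTS => h' T ((hmem' T).mpr (Or.inr (Or.inr ⟨hT, hTS⟩)))
      have hsepS : ArcSep S k l := by
        by_contra hno
        apply hR
        refine Or.inr fun T hT hsep => ?_
        by_cases hTS : T = S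
        · rw [hTS] at hsep; exact hno hsep
        · exact huniq T hT hTS hsep
      have hnsep' : ¬ ArcSep (S.erase p) k l := h' _ ((hmem' _).mpr (Or.inr (Or.inl rfl)))
      obtain ⟨⟨p1, hp1S, hp1⟩, ⟨q1, hq1S, hq1⟩⟩ := hsepS
      rcases not_and_or.mp hnsep' with hno1 | hno2
      · push_neg at hno1
        have honly : ∀ x ∈ S, arcPos (k+1) x ≤ arcPos (k+1) l → x = p := by
          intro x hx hxl
          by_contra hxp
          have := hno1 x (Finset.mem_erase.mpr ⟨hxp, hx⟩)
          omega
        have hp1p := honly p1 hp1S hp1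
        rw [hp1p] at hp1
        exact Or.inr (Or.inl (half_key hcr hS hp hkl huniq honly ⟨q1, hq1S, hq1⟩ hp1))
      · push_neg at hno2
        have honly2 : ∀ x ∈ S, arcPos (l+1) x ≤ arcPos (l+1) k → x = p := by
          intro x hx hxl
          by_contra hxp
          have := hno2 x (Finset.mem_erase.mpr ⟨hxp, hx⟩)
          omega
        have hq1p := honly2 q1 hq1S hq1
        rw [hq1p] at hq1
        have hres := half_key hcr hS hp (fun e => hkl e.symm)
          (fun T hT hTS hsep => huniq T hT hTS (sep_symm hsep)) honly2
          ⟨p1, hp1S, hp1⟩ hq1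
        exact Or.inr (Or.inr ⟨sameRegion_symm hres.2, sameRegion_symm hres.1⟩)
    set A : Set (Fin m) := regionOf PP (p-1) with hAdef
    set B : Set (Fin m) := regionOf PP p with hBdef
    have hABne : A ≠ B := fun e => hB' (regionOf_eq_iff.mp e)
    have hregAB : ∀ k : Fin m,
        (SameRegion PP k (p-1) ∨ SameRegion PP k p) → regionOf PP' k = A ∪ B := by
      intro k hk
      have hk' : SameRegion PP' k (p-1) := by
        rcases hk with hk | hk
        · exact hAmono _ _ hk
        · exact sameRegion_trans (hAmono _ _ hk) (sameRegion_symm hB)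
      ext l
      simp only [mem_regionOf, Set.mem_union]
      constructor
      · intro h'
        rcases hC k l h' with h | ⟨h1, h2⟩ | ⟨h1, h2⟩
        · rcases hk with hk | hk
          · exact Or.inl (sameRegion_trans (sameRegion_symm hk) h)
          · exact Or.inr (sameRegion_trans (sameRegion_symm hk) h)
        · exact Or.inr h2
        · exact Or.inl h2
      · intro h
        rcases h with h | h
        · exact sameRegion_trans hk' (hAmono _ _ h)
        · exact sameRegion_trans (sameRegion_trans hk' hB) (hAmono _ _ h)
    have hregfix : ∀ k : Fin m, ¬ SameRegion PP k (p-1) → ¬ SameRegion PP k p →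
        regionOf PP' k = regionOf PP k := by
      intro k h1 h2
      ext l
      simp only [mem_regionOf]
      constructor
      · intro h'
        rcases hC k l h' with h | ⟨ha, _⟩ | ⟨ha, _⟩
        · exact h
        · exact absurd ha h1
        · exact absurd ha h2
      · exact fun h => hAmono _ _ h
    have hnotAB : ∀ k : Fin m, regionOf PP k ≠ A ∪ B := by
      intro k e
      have h1 : SameRegion PP k (p-1) := by
        have hmemu : (p-1) ∈ A ∪ B := Set.mem_union_left _ (sameRegion_refl PP (p-1))
        rw [← e] at hmemu
        exact hmemu
      have h2 : SameRegion PP k p := by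
        have hmemu : p ∈ A ∪ B := Set.mem_union_right _ (sameRegion_refl PP p)
        rw [← e] at hmemu
        exact hmemu
      exact hB' (sameRegion_trans (sameRegion_symm h1) h2)
    have hrange : Set.range (regionOf PP') =
        insert (A ∪ B) (Set.range (regionOf PP) \ {A, B}) := by
      ext C
      constructor
      · rintro ⟨k, rfl⟩
        by_cases hk : SameRegion PP k (p-1) ∨ SameRegion PP k p
        · rw [hregAB k hk]; exact Set.mem_insert _ _
        · push_neg at hk
          rw [hregfix k hk.1 hk.2]
          refine Set.mem_insert_of_mem _ ⟨⟨k, rfl⟩, ?_⟩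
          simp only [Set.mem_insert_iff, Set.mem_singleton_iff]
          push_neg
          exact ⟨fun e => hk.1 (regionOf_eq_iff.mp e), fun e => hk.2 (regionOf_eq_iff.mp e)⟩
      · intro hCm
        rcases Set.mem_insert_iff.mp hCm with rfl | ⟨⟨k, rfl⟩, hk⟩
        · exact ⟨p-1, hregAB (p-1) (Or.inl (sameRegion_refl _ _))⟩
        · simp only [Set.mem_insert_iff, Set.mem_singleton_iff] at hk
          push_neg at hk
          exact ⟨k, hregfix k (fun h => hk.1 (regionOf_eq_iff.mpr h))
            (fun h => hk.2 (regionOf_eq_iff.mpr h))⟩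
    have hfinR : (Set.range (regionOf PP)).Finite := Set.toFinite _
    have hsub : ({A, B} : Set (Set (Fin m))) ⊆ Set.range (regionOf PP) := by
      rw [Set.insert_subset_iff, Set.singleton_subset_iff]
      exact ⟨⟨p-1, rfl⟩, ⟨p, rfl⟩⟩
    have h2le : 2 ≤ (Set.range (regionOf PP)).ncard := by
      have hn := Set.ncard_le_ncard hsub hfinR
      rwa [Set.ncard_pair hABne] at hn
    have hunion_notmem : (A ∪ B) ∉ Set.range (regionOf PP) \ ({A, B} : Set (Set (Fin m))) := by
      intro h
      obtain ⟨k, hk⟩ := h.1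
      exact hnotAB k hk
    have hcount : (Set.range (regionOf PP')).ncard = (Set.range (regionOf PP)).ncard - 1 := by
      rw [hrange, Set.ncard_insert_of_notMem hunion_notmem,
        Set.ncard_diff hsub, Set.ncard_pair hABne]
      omega
    omega

end Counting

/-- combinatorial Riemann–Hurwitz: Let `PP` be a sibling portrait of
an `n`-gon inserted in a round gap of degree `D` (modeled on the `D*n` preimage
points; the case `D = d` is the full disk).  The resulting gaps are the polygons
`S ∈ PP`, of degree `S.card / n`, and the round gaps, whose degree is the number
of unit arcs they contain, so that the sum of `(degree − 1)` over all round gaps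
is `D*n − numRoundGaps PP`.  Then the degrees `d_i` of all the gaps satisfy
`Σ_i (d_i − 1) = D − 1`. -/
theorem degree_sum_formula (D n : ℕ) (hD : 1 ≤ D) (hn : 2 ≤ n) [NeZero (D * n)]
    (PP : Finset (Finset (Fin (D * n)))) (hPP : IsPortrait D n PP) :
    (∑ S ∈ PP, (S.card / n - 1)) + (D * n - numRoundGaps PP) = D - 1 := by
  obtain ⟨hpoly, hcr, hcov⟩ := hPP
  have hnpos : 0 < n := by omega
  have hne : ∀ S ∈ PP, S.Nonempty := fun S hS =>
    Finset.card_pos.mp (by have := (hpoly S hS).1; omega)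
  have hsum : ∑ S ∈ PP, S.card = D * n :=
    sum_cards PP (fun S hS T hT h => (hcr S hS T hT h).1) hcov
  have hblen : ∀ S ∈ PP, n ≤ S.card := by
    intro S hS
    have hd := (hpoly S hS).2.1
    have h2 := (hpoly S hS).1
    exact Nat.le_of_dvd (by omega) hd
  have hdiv : ∑ S ∈ PP, S.card / n = D := by
    have h1 : (∑ S ∈ PP, S.card / n) * n = D * n := by
      rw [Finset.sum_mul,
        Finset.sum_congr rfl (fun S hS => Nat.div_mul_cancel (hpoly S hS).2.1)]
      exact hsum
    exact Nat.eq_of_mul_eq_mul_right hnpos h1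
  have hterm : ∀ S ∈ PP, 1 ≤ S.card / n :=
    fun S hS => (Nat.one_le_div_iff hnpos).mpr (hblen S hS)
  have hb1 : 1 ≤ PP.card := by
    have hx : (0 : ℕ) < D * n := Nat.pos_of_ne_zero (NeZero.ne _)
    obtain ⟨S, hS, _⟩ := hcov ⟨0, hx⟩
    exact Finset.card_pos.mpr ⟨S, hS⟩
  have hsum1 : (∑ S ∈ PP, (S.card / n - 1)) + PP.card = D := by
    have he : ∑ S ∈ PP, (S.card / n - 1 + 1) = ∑ S ∈ PP, S.card / n :=
      Finset.sum_congr rfl fun S hS => by have := hterm S hS; omega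
    rw [Finset.sum_add_distrib, Finset.sum_const, smul_eq_mul, mul_one] at he
    omega
  have hcardle : PP.card ≤ D * n := by
    have hle : PP.card ≤ ∑ S ∈ PP, S.card := by
      calc PP.card = ∑ _S ∈ PP, 1 := by rw [Finset.sum_const, smul_eq_mul, mul_one]
        _ ≤ ∑ S ∈ PP, S.card := Finset.sum_le_sum fun S hS => Finset.card_pos.mpr (hne S hS)
    omega
  have hregion := region_count (D * n - PP.card) PP hne
    (fun S hS T hT h => hcr S hS T hT h) hcov rfl
  have hnum : numRoundGaps PP = (D * n - PP.card) + 1 := by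
    rw [numRoundGaps_eq_ncard, hregion]
  omega
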